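/- Let C be a TDD of width k respecting a vtree T over a finite variable set X, let x ∈ X and b ∈ {0,1}, and let τ_b ∈ 2^{{x}} be the assignment mapping x to b. Then there exists a TDD C' respecting the vtree T∖x, of size at most |C| and width at most k, computing the Boolean function f_C[τ_b] over X∖{x}. -/

import Mathlib

/-- A vtree: a rooted binary tree whose leaves are labeled by variables. -/
inductive Vtree (V : Type) where
  | leaf : V → Vtree V
  | node : Vtree V → Vtree V → Vtree V

namespace Vtree

variable {V : Type} [DecidableEq V]

/-- The set of variables labeling the leaves of a vtree. -/
def vars : Vtree V → Finset V
  | leaf x => {x}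
  | node l r => l.vars ∪ r.vars

/-- A vtree is proper when its leaves carry pairwise distinct variables,
so that the leaves are in one-to-one correspondence with `vars`. -/
def Proper : Vtree V → Prop
  | leaf _ => True
  | node l r => l.Proper ∧ r.Proper ∧ Disjoint l.vars r.vars

/-- `T.IsNode t` : `t` is (the subtree rooted at) a node of `T`. -/
def IsNode : Vtree V → Vtree V → Prop
  | leaf x, t => t = leaf x
  | node l r, t => t = node l r ∨ l.IsNode t ∨ r.IsNode t

/-- Remove every leaf whose variable is in `Y`, suppressing unary nodes.
Returns `none` if no leaf survives. -/
def restrict (Y : Finset V) : Vtree V → Option (Vtree V)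
  | leaf x => if x ∈ Y then none else some (leaf x)
  | node l r =>
    match l.restrict Y, r.restrict Y with
    | none, o => o
    | some l', none => some l'
    | some l', some r' => some (node l' r')

/-- The vtree `T ∖ x`. -/
def remove (x : V) (T : Vtree V) : Option (Vtree V) := T.restrict {x}

/-- A vtree is linear when every internal node has a leaf child. -/
def Linear : Vtree V → Prop
  | leaf _ => True
  | node l r => ((∃ x, l = leaf x) ∨ (∃ x, r = leaf x)) ∧ l.Linear ∧ r.Linear

/-- The variable order induced by a linear vtree. -/
def order : Vtree V → List V
  | leaf x => [x]
  | node (leaf x) r => x :: r.order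
  | node l (leaf x) => x :: l.order
  | node l r => l.order ++ r.order

end Vtree

/-- Labels of leaf-layer nodes of a TDD: the positive literal, the negative
literal, and the constants 1 and 0. -/
inductive TLab where
  | pos | neg | one | zero
deriving DecidableEq

/-- Disjunction of two leaf labels (used when contracting twin leaf nodes). -/
def TLab.lor : TLab → TLab → TLab
  | .zero, a => a
  | a, .zero => a
  | .one, _ => .one
  | _, .one => .one
  | .pos, .pos => .pos
  | .neg, .neg => .neg
  | .pos, .neg => .one
  | .neg, .pos => .one

/-- A (non-deterministic) tree decision diagram structured along a vtree:
one layer of nodes (identified by natural numbers) per vtree node; leaf-layer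
nodes carry labels, internal-layer nodes carry their sets of input pairs. -/
inductive NTDD (V : Type) where
  | leaf (x : V) (ns : Finset ℕ) (lab : ℕ → TLab)
  | node (l r : NTDD V) (ns : Finset ℕ) (E : ℕ → Finset (ℕ × ℕ))

namespace NTDD

variable {V : Type}

/-- The vtree that an nTDD is structured along. -/
def shape : NTDD V → Vtree V
  | leaf x _ _ => .leaf x
  | node l r _ _ => .node l.shape r.shape

/-- The set of nodes of the top (root) layer. -/
def nodes : NTDD V → Finset ℕ
  | leaf _ ns _ => ns
  | node _ _ ns _ => ns

/-- The size of an nTDD: the total number of input pairs. -/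
def size : NTDD V → ℕ
  | leaf _ _ _ => 0
  | node l r ns E => l.size + r.size + ∑ g ∈ ns, (E g).card

/-- The width of an nTDD: the maximal cardinality of a layer. -/
def width : NTDD V → ℕ
  | leaf _ ns _ => ns.card
  | node l r ns _ => max ns.card (max l.width r.width)

/-- `C.sat g τ` : (the restriction of) the assignment `τ` is a model of the
function `f_g` computed by the top-layer node `g` of `C`. -/
def sat : NTDD V → ℕ → (V → Bool) → Prop
  | leaf x _ lab, g, τ =>
    match lab g with
    | .pos => τ x = true
    | .neg => τ x = false
    | .one => True
    | .zero => False
  | node l r _ E, g, τ => ∃ p ∈ E g, l.sat p.1 τ ∧ r.sat p.2 τ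

/-- Well-formedness: input pairs of top-layer nodes reference nodes of the
children layers. -/
def WF : NTDD V → Prop
  | leaf _ _ _ => True
  | node l r ns E => l.WF ∧ r.WF ∧ ∀ g ∈ ns, ∀ p ∈ E g, p.1 ∈ l.nodes ∧ p.2 ∈ r.nodes

/-- Determinism, turning an nTDD into a TDD: at each leaf layer at most one
node labeled by each of `x`, `¬x`, `1`, and if a node is labeled `1` then all
other nodes are labeled `0`; at each internal layer every pair is the input of
at most one node. -/
def Det : NTDD V → Prop
  | leaf _ ns lab =>
      (∀ g ∈ ns, ∀ g' ∈ ns, lab g = TLab.pos → lab g' = TLab.pos → g = g') ∧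
      (∀ g ∈ ns, ∀ g' ∈ ns, lab g = TLab.neg → lab g' = TLab.neg → g = g') ∧
      (∀ g ∈ ns, ∀ g' ∈ ns, lab g = TLab.one → lab g' = TLab.one → g = g') ∧
      (∀ g ∈ ns, lab g = TLab.one → ∀ g' ∈ ns, g' ≠ g → lab g' = TLab.zero)
  | node l r ns E => l.Det ∧ r.Det ∧ ∀ g ∈ ns, ∀ g' ∈ ns, g ≠ g' → Disjoint (E g) (E g')

/-- `C.Subdiagram D` : `D` is the sub-diagram of `C` sitting at some node of
the underlying vtree (including `C` itself). -/
def Subdiagram : NTDD V → NTDD V → Prop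
  | leaf x ns lab, D => D = leaf x ns lab
  | node l r ns E, D => D = node l r ns E ∨ l.Subdiagram D ∨ r.Subdiagram D

/-- A TDD is full if, at every layer, every assignment is a model of some node
of that layer. -/
def Full (C : NTDD V) : Prop :=
  ∀ D : NTDD V, C.Subdiagram D → ∀ τ : V → Bool, ∃ g ∈ D.nodes, D.sat g τ

end NTDD

/-- A choice of one node id per vtree node, mirroring the vtree: the data of a
certificate. -/
inductive IdTree where
  | leaf (g : ℕ)
  | node (g : ℕ) (l r : IdTree)

/-- The id chosen at the root. -/
def IdTree.root : IdTree → ℕ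
  | .leaf g => g
  | .node g _ _ => g

namespace NTDD

variable {V : Type}

/-- `C.IsCert P τ` : the choice `P` of one node per layer is a certificate for
`τ` in `C` (except for the root condition `P.root = out`, stated separately):
at a leaf labeled `x` the chosen node is labeled `1` or by a literal satisfied
by `τ`, and at an internal node the chosen pair of children nodes is an input
of the chosen node. -/
def IsCert : NTDD V → IdTree → (V → Bool) → Prop
  | leaf x ns lab, IdTree.leaf g, τ =>
      g ∈ ns ∧ (lab g = TLab.one ∨ (lab g = TLab.pos ∧ τ x = true) ∨
        (lab g = TLab.neg ∧ τ x = false))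
  | node l r ns E, IdTree.node g pl pr, τ =>
      g ∈ ns ∧ (pl.root, pr.root) ∈ E g ∧ l.IsCert pl τ ∧ r.IsCert pr τ
  | _, _, _ => False

/-- `SubPair C P D Q` : `D` is the sub-diagram of `C` at some vtree node `t`,
and `Q` is the corresponding part of the certificate data `P` (so `Q.root` is
the node that `P` chooses at `t`). -/
def SubPair : NTDD V → IdTree → NTDD V → IdTree → Prop
  | leaf x ns lab, P, D, Q => D = leaf x ns lab ∧ Q = P
  | node l r ns E, P, D, Q =>
      (D = node l r ns E ∧ Q = P) ∨
      (match P with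
       | IdTree.node _ pl pr => l.SubPair pl D Q ∨ r.SubPair pr D Q
       | _ => False)

/-- Contract the two top-layer nodes `g1, g1'` into the fresh node `v`. -/
def contractLayer (g1 g1' v : ℕ) : NTDD V → NTDD V
  | leaf x ns lab =>
      leaf x (insert v ((ns.erase g1).erase g1'))
        (fun g => if g = v then (lab g1).lor (lab g1') else lab g)
  | node l r ns E =>
      node l r (insert v ((ns.erase g1).erase g1'))
        (fun g => if g = v then E g1 ∪ E g1' else E g)

/-- Twin contraction of nodes `g1, g1'` of the left child layer into `v`:
they are merged in the left layer, and every input pair `(g1, g2)` or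
`(g1', g2)` of a top-layer node is replaced by `(v, g2)`. -/
def contractAtL (g1 g1' v : ℕ) : NTDD V → NTDD V
  | node l r ns E =>
      node (l.contractLayer g1 g1' v) r ns
        (fun g => (E g).image (fun p => if p.1 = g1 ∨ p.1 = g1' then (v, p.2) else p))
  | C => C

/-- Twin contraction of nodes `g1, g1'` of the right child layer into `v`. -/
def contractAtR (g1 g1' v : ℕ) : NTDD V → NTDD V
  | node l r ns E =>
      node l (r.contractLayer g1 g1' v) ns
        (fun g => (E g).image (fun p => if p.2 = g1 ∨ p.2 = g1' then (p.1, v) else p))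
  | C => C

open Classical in
/-- Replace the sub-diagram `D` of `C` by `D'` (in a proper vtree, sub-diagrams
at distinct positions are distinct, so this is unambiguous). -/
noncomputable def replace : NTDD V → NTDD V → NTDD V → NTDD V
  | leaf x ns lab, D, D' => if leaf x ns lab = D then D' else leaf x ns lab
  | node l r ns E, D, D' =>
      if node l r ns E = D then D'
      else node (l.replace D D') (r.replace D D') ns E

/-- `g1` and `g1'` are twins of the left child layer: they have the same
siblings with respect to every top-layer node. -/
def TwinsL (g1 g1' : ℕ) : NTDD V → Prop
  | node l _ ns E => g1 ∈ l.nodes ∧ g1' ∈ l.nodes ∧ g1 ≠ g1' ∧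
      ∀ g ∈ ns, ∀ g2 : ℕ, ((g1, g2) ∈ E g ↔ (g1', g2) ∈ E g)
  | _ => False

/-- `g1` and `g1'` are twins of the right child layer. -/
def TwinsR (g1 g1' : ℕ) : NTDD V → Prop
  | node _ r ns E => g1 ∈ r.nodes ∧ g1' ∈ r.nodes ∧ g1 ≠ g1' ∧
      ∀ g ∈ ns, ∀ g2 : ℕ, ((g2, g1) ∈ E g ↔ (g2, g1') ∈ E g)
  | _ => False

/-- The node set of the left child layer. -/
def leftNodes : NTDD V → Finset ℕ
  | node l _ _ _ => l.nodes
  | _ => ∅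

/-- The node set of the right child layer. -/
def rightNodes : NTDD V → Finset ℕ
  | node _ r _ _ => r.nodes
  | _ => ∅

end NTDD

/-- The number of distinct non-trivial `Y`-subfunctions of the Boolean
function `f` : functions of the form `σ ↦ f (Y.piecewise τ σ)` for some
`τ`, having at least one model. -/
noncomputable def subCount {V : Type} [DecidableEq V] (f : (V → Bool) → Prop) (Y : Finset V) : ℕ :=
  Nat.card {h : (V → Bool) → Prop |
    (∃ τ : V → Bool, h = fun σ => f (Y.piecewise τ σ)) ∧ ∃ σ : V → Bool, h σ}

/-- The number of distinct `Y`-subfunctions of `f` (trivial ones included). -/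
noncomputable def subCountAll {V : Type} [DecidableEq V] (f : (V → Bool) → Prop) (Y : Finset V) : ℕ :=
  Nat.card {h : (V → Bool) → Prop |
    ∃ τ : V → Bool, h = fun σ => f (Y.piecewise τ σ)}

section Aux
set_option linter.unusedSectionVars false

namespace TLab

/-- Boolean evaluation of a leaf label given the value of its variable. -/
def eval : TLab → Bool → Bool
  | .pos, v => v
  | .neg, v => !v
  | .one, _ => true
  | .zero, _ => false

instance : Fintype TLab := ⟨{.pos, .neg, .one, .zero}, by intro x; cases x <;> decide⟩

instance : Std.Commutative TLab.lor := ⟨by decide⟩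
instance : Std.Associative TLab.lor := ⟨by decide⟩

lemma eval_lor : ∀ (u w : TLab) (v : Bool), (u.lor w).eval v = (u.eval v || w.eval v) := by
  decide

lemma lor_eq_pos : ∀ (u w : TLab), u.lor w = .pos → u = .pos ∨ w = .pos := by decide
lemma lor_eq_neg : ∀ (u w : TLab), u.lor w = .neg → u = .neg ∨ w = .neg := by decide
lemma lor_eq_one : ∀ (u w : TLab), u.lor w = .one →
    u = .one ∨ w = .one ∨ (u = .pos ∧ w = .neg) ∨ (u = .neg ∧ w = .pos) := by decide

end TLab

lemma fold_eval {s : Finset ℕ} {f : ℕ → TLab} {v : Bool} :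
    (s.fold TLab.lor .zero f).eval v = true ↔ ∃ a ∈ s, (f a).eval v = true := by
  classical
  induction s using Finset.induction with
  | empty => simp [TLab.eval]
  | @insert _ _ h ih =>
      rw [Finset.fold_insert h]
      simp [TLab.eval_lor, ih]

lemma fold_eq_pos {s : Finset ℕ} {f : ℕ → TLab} (h : s.fold TLab.lor .zero f = .pos) :
    ∃ a ∈ s, f a = .pos := by
  classical
  induction s using Finset.induction with
  | empty => simp [Finset.fold_empty] at h
  | @insert _ _ hx ih =>
      rw [Finset.fold_insert hx] at h
      rcases TLab.lor_eq_pos _ _ h with h1 | h1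
      · exact ⟨_, Finset.mem_insert_self _ _, h1⟩
      · obtain ⟨a, ha, hfa⟩ := ih h1
        exact ⟨a, Finset.mem_insert_of_mem ha, hfa⟩

lemma fold_eq_neg {s : Finset ℕ} {f : ℕ → TLab} (h : s.fold TLab.lor .zero f = .neg) :
    ∃ a ∈ s, f a = .neg := by
  classical
  induction s using Finset.induction with
  | empty => simp [Finset.fold_empty] at h
  | @insert _ _ hx ih =>
      rw [Finset.fold_insert hx] at h
      rcases TLab.lor_eq_neg _ _ h with h1 | h1
      · exact ⟨_, Finset.mem_insert_self _ _, h1⟩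
      · obtain ⟨a, ha, hfa⟩ := ih h1
        exact ⟨a, Finset.mem_insert_of_mem ha, hfa⟩

lemma fold_eq_one {s : Finset ℕ} {f : ℕ → TLab} (h : s.fold TLab.lor .zero f = .one) :
    (∃ a ∈ s, f a = .one) ∨ ((∃ a ∈ s, f a = .pos) ∧ (∃ a ∈ s, f a = .neg)) := by
  classical
  induction s using Finset.induction with
  | empty => simp [Finset.fold_empty] at h
  | @insert _ _ hx ih =>
      rw [Finset.fold_insert hx] at h
      rcases TLab.lor_eq_one _ _ h with h1 | h1 | ⟨h1, h2⟩ | ⟨h1, h2⟩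
      · exact Or.inl ⟨_, Finset.mem_insert_self _ _, h1⟩
      · rcases ih h1 with ⟨c, hc, hfc⟩ | ⟨⟨c, hc, hfc⟩, ⟨d, hd, hfd⟩⟩
        · exact Or.inl ⟨c, Finset.mem_insert_of_mem hc, hfc⟩
        · exact Or.inr ⟨⟨c, Finset.mem_insert_of_mem hc, hfc⟩,
            ⟨d, Finset.mem_insert_of_mem hd, hfd⟩⟩
      · refine Or.inr ⟨⟨_, Finset.mem_insert_self _ _, h1⟩, ?_⟩
        obtain ⟨d, hd, hfd⟩ := fold_eq_neg h2
        exact ⟨d, Finset.mem_insert_of_mem hd, hfd⟩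
      · obtain ⟨d, hd, hfd⟩ := fold_eq_pos h2
        exact Or.inr ⟨⟨d, Finset.mem_insert_of_mem hd, hfd⟩,
          ⟨_, Finset.mem_insert_self _ _, h1⟩⟩

variable {V : Type} [DecidableEq V]

lemma Vtree.vars_nonempty (T : Vtree V) : T.vars.Nonempty := by
  induction T with
  | leaf x => exact ⟨x, by simp [Vtree.vars]⟩
  | node l r ihl ihr => exact ihl.mono (by simp [Vtree.vars, Finset.subset_union_left])

lemma Vtree.restrict_of_disjoint {T : Vtree V} {Y : Finset V} (h : ∀ v ∈ T.vars, v ∉ Y) :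
    T.restrict Y = some T := by
  induction T with
  | leaf x => simp [Vtree.restrict, h x (by simp [Vtree.vars])]
  | node l r ihl ihr =>
      have hl := ihl (fun v hv => h v (by simp [Vtree.vars, hv]))
      have hr := ihr (fun v hv => h v (by simp [Vtree.vars, hv]))
      simp [Vtree.restrict, hl, hr]

lemma Vtree.restrict_none_sub {T : Vtree V} {Y : Finset V} (h : T.restrict Y = none) :
    T.vars ⊆ Y := by
  induction T with
  | leaf x =>
      simp only [Vtree.restrict] at h
      split at h
      · simpa [Vtree.vars] using ‹x ∈ Y›
      · exact absurd h (by simp)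
  | node l r ihl ihr =>
      simp only [Vtree.restrict] at h
      rcases hl : l.restrict Y with _ | l' <;> rcases hr : r.restrict Y with _ | r' <;>
        rw [hl, hr] at h <;> simp_all [Vtree.vars, Finset.union_subset_iff]

lemma NTDD.sat_leaf_iff {x : V} {ns : Finset ℕ} {lab : ℕ → TLab} {g : ℕ} {τ : V → Bool} :
    (NTDD.leaf x ns lab).sat g τ ↔ (lab g).eval (τ x) = true := by
  rcases h : lab g with _ | _ | _ | _ <;> simp [NTDD.sat, h, TLab.eval]

lemma NTDD.sat_congr (C : NTDD V) (g : ℕ) (τ τ' : V → Bool)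
    (h : ∀ v ∈ C.shape.vars, τ v = τ' v) : C.sat g τ ↔ C.sat g τ' := by
  induction C generalizing g with
  | leaf x ns lab =>
      rw [NTDD.sat_leaf_iff, NTDD.sat_leaf_iff, h x (by simp [NTDD.shape, Vtree.vars])]
  | node l r ns E ihl ihr =>
      simp only [NTDD.sat]
      constructor <;> rintro ⟨p, hp, h1, h2⟩
      · exact ⟨p, hp, (ihl _ (fun v hv => h v (by simp [NTDD.shape, Vtree.vars, hv]))).1 h1,
          (ihr _ (fun v hv => h v (by simp [NTDD.shape, Vtree.vars, hv]))).1 h2⟩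
      · exact ⟨p, hp, (ihl _ (fun v hv => h v (by simp [NTDD.shape, Vtree.vars, hv]))).2 h1,
          (ihr _ (fun v hv => h v (by simp [NTDD.shape, Vtree.vars, hv]))).2 h2⟩

end Aux

section Main
set_option linter.unusedSectionVars false
set_option maxHeartbeats 1000000

variable {V : Type} [DecidableEq V]

lemma Vtree.restrict_node_def (Y : Finset V) (l r : Vtree V) :
    (Vtree.node l r).restrict Y =
      match l.restrict Y, r.restrict Y with
      | none, o => o
      | some l', none => some l'
      | some l', some r' => some (Vtree.node l' r') := rfl

/-- Conditioning when the left child is the leaf labeled `x`. -/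
lemma condLeft (x : V) (b : Bool)
    (nsl : Finset ℕ) (labl : ℕ → TLab) (r : NTDD V) (ns : Finset ℕ)
    (E : ℕ → Finset (ℕ × ℕ)) (hxr : x ∉ r.shape.vars)
    (hWF : (NTDD.node (NTDD.leaf x nsl labl) r ns E).WF)
    (hDet : (NTDD.node (NTDD.leaf x nsl labl) r ns E).Det) :
    ∃ C' : NTDD V, C'.shape = r.shape ∧ C'.WF ∧ C'.Det ∧ C'.nodes = ns ∧
      C'.size ≤ (NTDD.node (NTDD.leaf x nsl labl) r ns E).size ∧
      C'.width ≤ (NTDD.node (NTDD.leaf x nsl labl) r ns E).width ∧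
      ∀ g σ, (C'.sat g σ ↔
        (NTDD.node (NTDD.leaf x nsl labl) r ns E).sat g (Function.update σ x b)) := by
  classical
  obtain ⟨-, hWr, hE⟩ := hWF
  obtain ⟨hDl, hDr, hdisjE⟩ := hDet
  obtain ⟨d1, d2, d3, d4⟩ := hDl
  set S : ℕ → Finset ℕ :=
    fun g => ((E g).filter (fun p => (labl p.1).eval b = true)).image Prod.snd with hS
  have hSmem : ∀ g g2, g2 ∈ S g ↔ ∃ p ∈ E g, (labl p.1).eval b = true ∧ p.2 = g2 := by
    intro g g2
    constructor
    · intro h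
      obtain ⟨p, hp, rfl⟩ := Finset.mem_image.mp h
      obtain ⟨hpE, he⟩ := Finset.mem_filter.mp hp
      exact ⟨p, hpE, he, rfl⟩
    · rintro ⟨p, hpE, he, rfl⟩
      exact Finset.mem_image.mpr ⟨p, Finset.mem_filter.mpr ⟨hpE, he⟩, rfl⟩
  have huniq : ∀ g1 ∈ nsl, ∀ g1' ∈ nsl,
      (labl g1).eval b = true → (labl g1').eval b = true → g1 = g1' := by
    intro g1 h1 g1' h1' e e'
    by_contra hne
    rcases e1 : labl g1 with _ | _ | _ | _ <;> rcases e2 : labl g1' with _ | _ | _ | _ <;>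
      rw [e1] at e <;> rw [e2] at e'
    all_goals first
      | exact hne (d1 g1 h1 g1' h1' e1 e2)
      | exact hne (d2 g1 h1 g1' h1' e1 e2)
      | exact hne (d3 g1 h1 g1' h1' e1 e2)
      | (have hz := d4 g1 h1 e1 g1' h1' (fun h => hne h.symm); rw [e2] at hz;
         exact TLab.noConfusion hz)
      | (have hz := d4 g1' h1' e2 g1 h1 hne; rw [e1] at hz; exact TLab.noConfusion hz)
      | (cases b <;> simp [TLab.eval] at e e')
  have hSsub : ∀ g ∈ ns, S g ⊆ r.nodes := by
    intro g hg g2 hg2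
    obtain ⟨p, hpE, -, rfl⟩ := (hSmem g g2).mp hg2
    exact (hE g hg p hpE).2
  have hSdisj : ∀ g ∈ ns, ∀ g' ∈ ns, g ≠ g' → Disjoint (S g) (S g') := by
    intro g hg g' hg' hne
    rw [Finset.disjoint_left]
    intro g2 h h'
    obtain ⟨p, hpE, he, hp2⟩ := (hSmem g g2).mp h
    obtain ⟨q, hqE, he', hq2⟩ := (hSmem g' g2).mp h'
    have h1 : p.1 = q.1 := huniq p.1 (hE g hg p hpE).1 q.1 (hE g' hg' q hqE).1 he he'
    have hpq : p = q := Prod.ext h1 (hp2.trans hq2.symm)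
    exact Finset.disjoint_left.mp (hdisjE g hg g' hg' hne) hpE (hpq ▸ hqE)
  have hupd : ∀ σ : V → Bool, ∀ v ∈ r.shape.vars, (Function.update σ x b) v = σ v := by
    intro σ v hv
    exact Function.update_of_ne (fun h => hxr (by rw [← h]; exact hv)) _ _
  have hsem : ∀ g σ,
      ((NTDD.node (NTDD.leaf x nsl labl) r ns E).sat g (Function.update σ x b) ↔
        ∃ g2 ∈ S g, r.sat g2 σ) := by
    intro g σ
    constructor
    · rintro ⟨p, hp, h1, h2⟩
      have h1' := NTDD.sat_leaf_iff.mp h1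
      rw [Function.update_self] at h1'
      exact ⟨p.2, (hSmem g p.2).mpr ⟨p, hp, h1', rfl⟩,
        (NTDD.sat_congr r p.2 _ σ (hupd σ)).1 h2⟩
    · rintro ⟨g2, hg2, h2⟩
      obtain ⟨p, hp, he, rfl⟩ := (hSmem g g2).mp hg2
      exact ⟨p, hp, NTDD.sat_leaf_iff.mpr (by rw [Function.update_self]; exact he),
        (NTDD.sat_congr r p.2 _ σ (hupd σ)).2 h2⟩
  cases r with
  | leaf z nsr labr =>
    obtain ⟨r1, r2, r3, r4⟩ := hDr
    have honeuniq : ∀ g ∈ ns, ∀ g' ∈ ns,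
        (S g).fold TLab.lor .zero labr = .one →
        (S g').fold TLab.lor .zero labr = .one → g = g' := by
      intro g hg g' hg' e e'
      by_contra hne
      have hdj := Finset.disjoint_left.mp (hSdisj g hg g' hg' hne)
      rcases fold_eq_one e with ⟨a, ha, hla⟩ | ⟨⟨p, hp, hlp⟩, ⟨n, hn, hln⟩⟩ <;>
        rcases fold_eq_one e' with ⟨a', ha', hla'⟩ | ⟨⟨p', hp', hlp'⟩, ⟨n', hn', hln'⟩⟩
      · exact hdj ha ((r3 a (hSsub g hg ha) a' (hSsub g' hg' ha') hla hla') ▸ ha')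
      · have hz := r4 a (hSsub g hg ha) hla p' (hSsub g' hg' hp')
          (fun h => by rw [h, hla] at hlp'; exact TLab.noConfusion hlp')
        rw [hlp'] at hz; exact TLab.noConfusion hz
      · have hz := r4 a' (hSsub g' hg' ha') hla' p (hSsub g hg hp)
          (fun h => by rw [h, hla'] at hlp; exact TLab.noConfusion hlp)
        rw [hlp] at hz; exact TLab.noConfusion hz
      · exact hdj hp ((r1 p (hSsub g hg hp) p' (hSsub g' hg' hp') hlp hlp') ▸ hp')
    refine ⟨NTDD.leaf z ns (fun g => (S g).fold TLab.lor .zero labr), rfl, trivial,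
      ⟨?_, ?_, honeuniq, ?_⟩, rfl, Nat.zero_le _, ?_, ?_⟩
    · intro g hg g' hg' e e'
      obtain ⟨a, ha, hla⟩ := fold_eq_pos e
      obtain ⟨a', ha', hla'⟩ := fold_eq_pos e'
      by_contra hne
      exact Finset.disjoint_left.mp (hSdisj g hg g' hg' hne) ha
        ((r1 a (hSsub g hg ha) a' (hSsub g' hg' ha') hla hla') ▸ ha')
    · intro g hg g' hg' e e'
      obtain ⟨a, ha, hla⟩ := fold_eq_neg e
      obtain ⟨a', ha', hla'⟩ := fold_eq_neg e'
      by_contra hne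
      exact Finset.disjoint_left.mp (hSdisj g hg g' hg' hne) ha
        ((r2 a (hSsub g hg ha) a' (hSsub g' hg' ha') hla hla') ▸ ha')
    · intro g hg e g' hg' hne
      cases e' : (S g').fold TLab.lor .zero labr with
      | pos =>
        exfalso
        obtain ⟨p', hp', hlp'⟩ := fold_eq_pos e'
        rcases fold_eq_one e with ⟨a, ha, hla⟩ | ⟨⟨p, hp, hlp⟩, -⟩
        · have hz := r4 a (hSsub g hg ha) hla p' (hSsub g' hg' hp')
            (fun h => by rw [h, hla] at hlp'; exact TLab.noConfusion hlp')
          rw [hlp'] at hz; exact TLab.noConfusion hz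
        · have heq := r1 p (hSsub g hg hp) p' (hSsub g' hg' hp') hlp hlp'
          exact Finset.disjoint_left.mp (hSdisj g hg g' hg' (fun h => hne h.symm)) hp
            (heq ▸ hp')
      | neg =>
        exfalso
        obtain ⟨p', hp', hlp'⟩ := fold_eq_neg e'
        rcases fold_eq_one e with ⟨a, ha, hla⟩ | ⟨-, ⟨n, hn, hln⟩⟩
        · have hz := r4 a (hSsub g hg ha) hla p' (hSsub g' hg' hp')
            (fun h => by rw [h, hla] at hlp'; exact TLab.noConfusion hlp')
          rw [hlp'] at hz; exact TLab.noConfusion hz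
        · have heq := r2 n (hSsub g hg hn) p' (hSsub g' hg' hp') hln hlp'
          exact Finset.disjoint_left.mp (hSdisj g hg g' hg' (fun h => hne h.symm)) hn
            (heq ▸ hp')
      | one => exact absurd (honeuniq g' hg' g hg e' e) hne
      | zero => exact e'
    · simp only [NTDD.width]
      exact le_max_left _ _
    · intro g σ
      simp only [hsem g σ, NTDD.sat_leaf_iff, fold_eval]
  | node rl rr nsr Er =>
    obtain ⟨hDrl, hDrr, hdisjEr⟩ := hDr
    obtain ⟨hWrl, hWrr, hEr⟩ := hWr
    refine ⟨NTDD.node rl rr ns (fun g => (S g).biUnion Er), rfl, ⟨hWrl, hWrr, ?_⟩,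
      ⟨hDrl, hDrr, ?_⟩, rfl, ?_, ?_, ?_⟩
    · intro g hg p hp
      obtain ⟨g2, hg2, hpEr⟩ := Finset.mem_biUnion.mp hp
      exact hEr g2 (hSsub g hg hg2) p hpEr
    · intro g hg g' hg' hne
      rw [Finset.disjoint_left]
      intro p hp hp'
      obtain ⟨g2, hg2, hpEr⟩ := Finset.mem_biUnion.mp hp
      obtain ⟨g2', hg2', hpEr'⟩ := Finset.mem_biUnion.mp hp'
      by_cases hgg : g2 = g2'
      · subst hgg
        exact Finset.disjoint_left.mp (hSdisj g hg g' hg' hne) hg2 hg2'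
      · exact Finset.disjoint_left.mp
          (hdisjEr g2 (hSsub g hg hg2) g2' (hSsub g' hg' hg2') hgg) hpEr hpEr'
    · have key : ∑ g ∈ ns, ((S g).biUnion Er).card ≤ ∑ g2 ∈ nsr, (Er g2).card := by
        calc ∑ g ∈ ns, ((S g).biUnion Er).card
            ≤ ∑ g ∈ ns, ∑ g2 ∈ S g, (Er g2).card :=
              Finset.sum_le_sum (fun g _ => Finset.card_biUnion_le)
          _ = ∑ g2 ∈ ns.biUnion S, (Er g2).card :=
              (Finset.sum_biUnion (fun a ha a' ha' hne => hSdisj a ha a' ha' hne)).symm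
          _ ≤ ∑ g2 ∈ nsr, (Er g2).card :=
              Finset.sum_le_sum_of_subset (Finset.biUnion_subset.mpr (fun g hg => hSsub g hg))
      simp only [NTDD.size]
      omega
    · simp only [NTDD.width]
      omega
    · intro g σ
      rw [hsem g σ]
      constructor
      · rintro ⟨p, hp, h1, h2⟩
        obtain ⟨g2, hg2, hpEr⟩ := Finset.mem_biUnion.mp hp
        exact ⟨g2, hg2, p, hpEr, h1, h2⟩
      · rintro ⟨g2, hg2, p, hpEr, h1, h2⟩
        exact ⟨p, Finset.mem_biUnion.mpr ⟨g2, hg2, hpEr⟩, h1, h2⟩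

end Main

section Main2
set_option linter.unusedSectionVars false
set_option maxHeartbeats 1000000

variable {V : Type} [DecidableEq V]

/-- Conditioning when the right child is the leaf labeled `x`. -/
lemma condRight (x : V) (b : Bool)
    (nsr : Finset ℕ) (labr : ℕ → TLab) (l : NTDD V) (ns : Finset ℕ)
    (E : ℕ → Finset (ℕ × ℕ)) (hxl : x ∉ l.shape.vars)
    (hWF : (NTDD.node l (NTDD.leaf x nsr labr) ns E).WF)
    (hDet : (NTDD.node l (NTDD.leaf x nsr labr) ns E).Det) :
    ∃ C' : NTDD V, C'.shape = l.shape ∧ C'.WF ∧ C'.Det ∧ C'.nodes = ns ∧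
      C'.size ≤ (NTDD.node l (NTDD.leaf x nsr labr) ns E).size ∧
      C'.width ≤ (NTDD.node l (NTDD.leaf x nsr labr) ns E).width ∧
      ∀ g σ, (C'.sat g σ ↔
        (NTDD.node l (NTDD.leaf x nsr labr) ns E).sat g (Function.update σ x b)) := by
  classical
  obtain ⟨hWl, -, hE⟩ := hWF
  obtain ⟨hDl, hDr, hdisjE⟩ := hDet
  obtain ⟨d1, d2, d3, d4⟩ := hDr
  set S : ℕ → Finset ℕ :=
    fun g => ((E g).filter (fun p => (labr p.2).eval b = true)).image Prod.fst with hS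
  have hSmem : ∀ g g1, g1 ∈ S g ↔ ∃ p ∈ E g, (labr p.2).eval b = true ∧ p.1 = g1 := by
    intro g g1
    constructor
    · intro h
      obtain ⟨p, hp, rfl⟩ := Finset.mem_image.mp h
      obtain ⟨hpE, he⟩ := Finset.mem_filter.mp hp
      exact ⟨p, hpE, he, rfl⟩
    · rintro ⟨p, hpE, he, rfl⟩
      exact Finset.mem_image.mpr ⟨p, Finset.mem_filter.mpr ⟨hpE, he⟩, rfl⟩
  have huniq : ∀ g1 ∈ nsr, ∀ g1' ∈ nsr,
      (labr g1).eval b = true → (labr g1').eval b = true → g1 = g1' := by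
    intro g1 h1 g1' h1' e e'
    by_contra hne
    rcases e1 : labr g1 with _ | _ | _ | _ <;> rcases e2 : labr g1' with _ | _ | _ | _ <;>
      rw [e1] at e <;> rw [e2] at e'
    all_goals first
      | exact hne (d1 g1 h1 g1' h1' e1 e2)
      | exact hne (d2 g1 h1 g1' h1' e1 e2)
      | exact hne (d3 g1 h1 g1' h1' e1 e2)
      | (have hz := d4 g1 h1 e1 g1' h1' (fun h => hne h.symm); rw [e2] at hz;
         exact TLab.noConfusion hz)
      | (have hz := d4 g1' h1' e2 g1 h1 hne; rw [e1] at hz; exact TLab.noConfusion hz)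
      | (cases b <;> simp [TLab.eval] at e e')
  have hSsub : ∀ g ∈ ns, S g ⊆ l.nodes := by
    intro g hg g1 hg1
    obtain ⟨p, hpE, -, rfl⟩ := (hSmem g g1).mp hg1
    exact (hE g hg p hpE).1
  have hSdisj : ∀ g ∈ ns, ∀ g' ∈ ns, g ≠ g' → Disjoint (S g) (S g') := by
    intro g hg g' hg' hne
    rw [Finset.disjoint_left]
    intro g1 h h'
    obtain ⟨p, hpE, he, hp1⟩ := (hSmem g g1).mp h
    obtain ⟨q, hqE, he', hq1⟩ := (hSmem g' g1).mp h'
    have h2 : p.2 = q.2 := huniq p.2 (hE g hg p hpE).2 q.2 (hE g' hg' q hqE).2 he he'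
    have hpq : p = q := Prod.ext (hp1.trans hq1.symm) h2
    exact Finset.disjoint_left.mp (hdisjE g hg g' hg' hne) hpE (hpq ▸ hqE)
  have hupd : ∀ σ : V → Bool, ∀ v ∈ l.shape.vars, (Function.update σ x b) v = σ v := by
    intro σ v hv
    exact Function.update_of_ne (fun h => hxl (by rw [← h]; exact hv)) _ _
  have hsem : ∀ g σ,
      ((NTDD.node l (NTDD.leaf x nsr labr) ns E).sat g (Function.update σ x b) ↔
        ∃ g1 ∈ S g, l.sat g1 σ) := by
    intro g σ
    constructor
    · rintro ⟨p, hp, h1, h2⟩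
      have h2' := NTDD.sat_leaf_iff.mp h2
      rw [Function.update_self] at h2'
      exact ⟨p.1, (hSmem g p.1).mpr ⟨p, hp, h2', rfl⟩,
        (NTDD.sat_congr l p.1 _ σ (hupd σ)).1 h1⟩
    · rintro ⟨g1, hg1, h1⟩
      obtain ⟨p, hp, he, rfl⟩ := (hSmem g g1).mp hg1
      exact ⟨p, hp, (NTDD.sat_congr l p.1 _ σ (hupd σ)).2 h1,
        NTDD.sat_leaf_iff.mpr (by rw [Function.update_self]; exact he)⟩
  cases l with
  | leaf z nsl labl =>
    obtain ⟨r1, r2, r3, r4⟩ := hDl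
    have honeuniq : ∀ g ∈ ns, ∀ g' ∈ ns,
        (S g).fold TLab.lor .zero labl = .one →
        (S g').fold TLab.lor .zero labl = .one → g = g' := by
      intro g hg g' hg' e e'
      by_contra hne
      have hdj := Finset.disjoint_left.mp (hSdisj g hg g' hg' hne)
      rcases fold_eq_one e with ⟨a, ha, hla⟩ | ⟨⟨p, hp, hlp⟩, ⟨n, hn, hln⟩⟩ <;>
        rcases fold_eq_one e' with ⟨a', ha', hla'⟩ | ⟨⟨p', hp', hlp'⟩, ⟨n', hn', hln'⟩⟩
      · exact hdj ha ((r3 a (hSsub g hg ha) a' (hSsub g' hg' ha') hla hla') ▸ ha')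
      · have hz := r4 a (hSsub g hg ha) hla p' (hSsub g' hg' hp')
          (fun h => by rw [h, hla] at hlp'; exact TLab.noConfusion hlp')
        rw [hlp'] at hz; exact TLab.noConfusion hz
      · have hz := r4 a' (hSsub g' hg' ha') hla' p (hSsub g hg hp)
          (fun h => by rw [h, hla'] at hlp; exact TLab.noConfusion hlp)
        rw [hlp] at hz; exact TLab.noConfusion hz
      · exact hdj hp ((r1 p (hSsub g hg hp) p' (hSsub g' hg' hp') hlp hlp') ▸ hp')
    refine ⟨NTDD.leaf z ns (fun g => (S g).fold TLab.lor .zero labl), rfl, trivial,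
      ⟨?_, ?_, honeuniq, ?_⟩, rfl, Nat.zero_le _, ?_, ?_⟩
    · intro g hg g' hg' e e'
      obtain ⟨a, ha, hla⟩ := fold_eq_pos e
      obtain ⟨a', ha', hla'⟩ := fold_eq_pos e'
      by_contra hne
      exact Finset.disjoint_left.mp (hSdisj g hg g' hg' hne) ha
        ((r1 a (hSsub g hg ha) a' (hSsub g' hg' ha') hla hla') ▸ ha')
    · intro g hg g' hg' e e'
      obtain ⟨a, ha, hla⟩ := fold_eq_neg e
      obtain ⟨a', ha', hla'⟩ := fold_eq_neg e'
      by_contra hne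
      exact Finset.disjoint_left.mp (hSdisj g hg g' hg' hne) ha
        ((r2 a (hSsub g hg ha) a' (hSsub g' hg' ha') hla hla') ▸ ha')
    · intro g hg e g' hg' hne
      cases e' : (S g').fold TLab.lor .zero labl with
      | pos =>
        exfalso
        obtain ⟨p', hp', hlp'⟩ := fold_eq_pos e'
        rcases fold_eq_one e with ⟨a, ha, hla⟩ | ⟨⟨p, hp, hlp⟩, -⟩
        · have hz := r4 a (hSsub g hg ha) hla p' (hSsub g' hg' hp')
            (fun h => by rw [h, hla] at hlp'; exact TLab.noConfusion hlp')
          rw [hlp'] at hz; exact TLab.noConfusion hz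
        · have heq := r1 p (hSsub g hg hp) p' (hSsub g' hg' hp') hlp hlp'
          exact Finset.disjoint_left.mp (hSdisj g hg g' hg' (fun h => hne h.symm)) hp
            (heq ▸ hp')
      | neg =>
        exfalso
        obtain ⟨p', hp', hlp'⟩ := fold_eq_neg e'
        rcases fold_eq_one e with ⟨a, ha, hla⟩ | ⟨-, ⟨n, hn, hln⟩⟩
        · have hz := r4 a (hSsub g hg ha) hla p' (hSsub g' hg' hp')
            (fun h => by rw [h, hla] at hlp'; exact TLab.noConfusion hlp')
          rw [hlp'] at hz; exact TLab.noConfusion hz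
        · have heq := r2 n (hSsub g hg hn) p' (hSsub g' hg' hp') hln hlp'
          exact Finset.disjoint_left.mp (hSdisj g hg g' hg' (fun h => hne h.symm)) hn
            (heq ▸ hp')
      | one => exact absurd (honeuniq g' hg' g hg e' e) hne
      | zero => exact e'
    · simp only [NTDD.width]
      exact le_max_left _ _
    · intro g σ
      simp only [hsem g σ, NTDD.sat_leaf_iff, fold_eval]
  | node ll lr nsl El =>
    obtain ⟨hDll, hDlr, hdisjEl⟩ := hDl
    obtain ⟨hWll, hWlr, hEl⟩ := hWl
    refine ⟨NTDD.node ll lr ns (fun g => (S g).biUnion El), rfl, ⟨hWll, hWlr, ?_⟩,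
      ⟨hDll, hDlr, ?_⟩, rfl, ?_, ?_, ?_⟩
    · intro g hg p hp
      obtain ⟨g1, hg1, hpEl⟩ := Finset.mem_biUnion.mp hp
      exact hEl g1 (hSsub g hg hg1) p hpEl
    · intro g hg g' hg' hne
      rw [Finset.disjoint_left]
      intro p hp hp'
      obtain ⟨g1, hg1, hpEl⟩ := Finset.mem_biUnion.mp hp
      obtain ⟨g1', hg1', hpEl'⟩ := Finset.mem_biUnion.mp hp'
      by_cases hgg : g1 = g1'
      · subst hgg
        exact Finset.disjoint_left.mp (hSdisj g hg g' hg' hne) hg1 hg1'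
      · exact Finset.disjoint_left.mp
          (hdisjEl g1 (hSsub g hg hg1) g1' (hSsub g' hg' hg1') hgg) hpEl hpEl'
    · have key : ∑ g ∈ ns, ((S g).biUnion El).card ≤ ∑ g1 ∈ nsl, (El g1).card := by
        calc ∑ g ∈ ns, ((S g).biUnion El).card
            ≤ ∑ g ∈ ns, ∑ g1 ∈ S g, (El g1).card :=
              Finset.sum_le_sum (fun g _ => Finset.card_biUnion_le)
          _ = ∑ g1 ∈ ns.biUnion S, (El g1).card :=
              (Finset.sum_biUnion (fun a ha a' ha' hne => hSdisj a ha a' ha' hne)).symm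
          _ ≤ ∑ g1 ∈ nsl, (El g1).card :=
              Finset.sum_le_sum_of_subset (Finset.biUnion_subset.mpr (fun g hg => hSsub g hg))
      simp only [NTDD.size]
      omega
    · simp only [NTDD.width]
      omega
    · intro g σ
      rw [hsem g σ]
      constructor
      · rintro ⟨p, hp, h1, h2⟩
        obtain ⟨g1, hg1, hpEl⟩ := Finset.mem_biUnion.mp hp
        exact ⟨g1, hg1, p, hpEl, h1, h2⟩
      · rintro ⟨g1, hg1, p, hpEl, h1, h2⟩
        exact ⟨p, Finset.mem_biUnion.mpr ⟨g1, hg1, hpEl⟩, h1, h2⟩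

end Main2

section Main3
set_option linter.unusedSectionVars false
set_option maxHeartbeats 1000000

variable {V : Type} [DecidableEq V]

lemma cond_main (x : V) (b : Bool) (C : NTDD V) :
    C.shape.Proper → C.WF → C.Det →
    ∀ T', C.shape.restrict {x} = some T' →
    ∃ C' : NTDD V, C'.shape = T' ∧ C'.WF ∧ C'.Det ∧ C'.nodes = C.nodes ∧
      C'.size ≤ C.size ∧ C'.width ≤ C.width ∧
      ∀ g σ, (C'.sat g σ ↔ C.sat g (Function.update σ x b)) := by
  induction C with
  | leaf y ns lab =>
    intro _ _ hDet T' hT'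
    by_cases hyx : y = x
    · simp [NTDD.shape, Vtree.restrict, hyx] at hT'
    · simp only [NTDD.shape, Vtree.restrict, Finset.mem_singleton, if_neg hyx] at hT'
      obtain rfl := Option.some.inj hT'
      refine ⟨NTDD.leaf y ns lab, rfl, trivial, hDet, rfl, le_rfl, le_rfl, ?_⟩
      intro g σ
      rw [NTDD.sat_leaf_iff, NTDD.sat_leaf_iff, Function.update_of_ne hyx]
  | node l r ns E ihl ihr =>
    intro hp hWF hDet T' hT'
    obtain ⟨hpl, hpr, hdv⟩ := hp
    have hTnode : (NTDD.node l r ns E).shape.restrict {x} =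
        (Vtree.node l.shape r.shape).restrict {x} := rfl
    rw [hTnode, Vtree.restrict_node_def] at hT'
    by_cases hxl : x ∈ l.shape.vars
    · have hxr : x ∉ r.shape.vars := fun h => Finset.disjoint_left.mp hdv hxl h
      have hrr : r.shape.restrict {x} = some r.shape := by
        apply Vtree.restrict_of_disjoint
        intro v hv hmem
        rw [Finset.mem_singleton] at hmem
        subst hmem
        exact hxr hv
      rcases hl : l.shape.restrict {x} with _ | l''
      · -- left child is the leaf labeled x
        rw [hl, hrr] at hT'
        obtain rfl := Option.some.inj hT'
        have hsub := Vtree.restrict_none_sub hl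
        cases l with
        | node l1 l2 nsl El =>
          exfalso
          obtain ⟨hp1, hp2, hd12⟩ := hpl
          simp only [NTDD.shape, Vtree.vars, Finset.union_subset_iff] at hsub
          obtain ⟨v, hv⟩ := Vtree.vars_nonempty l1.shape
          obtain ⟨w, hw⟩ := Vtree.vars_nonempty l2.shape
          have hv' : v = x := Finset.mem_singleton.mp (hsub.1 hv)
          have hw' : w = x := Finset.mem_singleton.mp (hsub.2 hw)
          subst hv'
          rw [hw'] at hw
          exact Finset.disjoint_left.mp hd12 hv hw
        | leaf y nsl labl =>
          have hyx : y = x := by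
            by_contra h
            simp [NTDD.shape, Vtree.restrict, h] at hl
          subst hyx
          obtain ⟨C', h1, h2, h3, h4, h5, h6, h7⟩ := condLeft y b nsl labl r ns E hxr hWF hDet
          exact ⟨C', h1, h2, h3, h4, h5, h6, h7⟩
      · -- recurse into the left child
        rw [hl, hrr] at hT'
        obtain rfl := Option.some.inj hT'
        obtain ⟨hWl, hWr, hE⟩ := hWF
        obtain ⟨hDl, hDr, hdisjE⟩ := hDet
        obtain ⟨C1, h1, h2, h3, h4, h5, h6, h7⟩ := ihl hpl hWl hDl l'' hl
        have hupd : ∀ σ : V → Bool, ∀ v ∈ r.shape.vars, (Function.update σ x b) v = σ v := by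
          intro σ v hv
          exact Function.update_of_ne (fun h => hxr (by rw [← h]; exact hv)) _ _
        refine ⟨NTDD.node C1 r ns E, ?_, ⟨h2, hWr, ?_⟩, ⟨h3, hDr, hdisjE⟩, rfl, ?_, ?_, ?_⟩
        · show Vtree.node C1.shape r.shape = Vtree.node l'' r.shape
          rw [h1]
        · intro g hg p hp
          exact ⟨by rw [h4]; exact (hE g hg p hp).1, (hE g hg p hp).2⟩
        · simp only [NTDD.size]
          omega
        · simp only [NTDD.width]
          omega
        · intro g σ
          constructor
          · rintro ⟨p, hp, hs1, hs2⟩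
            exact ⟨p, hp, (h7 p.1 σ).1 hs1,
              (NTDD.sat_congr r p.2 (Function.update σ x b) σ (hupd σ)).2 hs2⟩
          · rintro ⟨p, hp, hs1, hs2⟩
            exact ⟨p, hp, (h7 p.1 σ).2 hs1,
              (NTDD.sat_congr r p.2 (Function.update σ x b) σ (hupd σ)).1 hs2⟩
    · have hll : l.shape.restrict {x} = some l.shape := by
        apply Vtree.restrict_of_disjoint
        intro v hv hmem
        rw [Finset.mem_singleton] at hmem
        subst hmem
        exact hxl hv
      by_cases hxr : x ∈ r.shape.vars
      · rcases hr : r.shape.restrict {x} with _ | r''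
        · -- right child is the leaf labeled x
          rw [hll, hr] at hT'
          obtain rfl := Option.some.inj hT'
          have hsub := Vtree.restrict_none_sub hr
          cases r with
          | node r1 r2 nsr Er =>
            exfalso
            obtain ⟨hp1, hp2, hd12⟩ := hpr
            simp only [NTDD.shape, Vtree.vars, Finset.union_subset_iff] at hsub
            obtain ⟨v, hv⟩ := Vtree.vars_nonempty r1.shape
            obtain ⟨w, hw⟩ := Vtree.vars_nonempty r2.shape
            have hv' : v = x := Finset.mem_singleton.mp (hsub.1 hv)
            have hw' : w = x := Finset.mem_singleton.mp (hsub.2 hw)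
            subst hv'
            rw [hw'] at hw
            exact Finset.disjoint_left.mp hd12 hv hw
          | leaf y nsr labr =>
            have hyx : y = x := by
              by_contra h
              simp [NTDD.shape, Vtree.restrict, h] at hr
            subst hyx
            obtain ⟨C', h1, h2, h3, h4, h5, h6, h7⟩ :=
              condRight y b nsr labr l ns E hxl hWF hDet
            exact ⟨C', h1, h2, h3, h4, h5, h6, h7⟩
        · -- recurse into the right child
          rw [hll, hr] at hT'
          obtain rfl := Option.some.inj hT'
          obtain ⟨hWl, hWr, hE⟩ := hWF
          obtain ⟨hDl, hDr, hdisjE⟩ := hDet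
          obtain ⟨C1, h1, h2, h3, h4, h5, h6, h7⟩ := ihr hpr hWr hDr r'' hr
          have hupd : ∀ σ : V → Bool, ∀ v ∈ l.shape.vars,
              (Function.update σ x b) v = σ v := by
            intro σ v hv
            exact Function.update_of_ne (fun h => hxl (by rw [← h]; exact hv)) _ _
          refine ⟨NTDD.node l C1 ns E, ?_, ⟨hWl, h2, ?_⟩, ⟨hDl, h3, hdisjE⟩, rfl, ?_, ?_, ?_⟩
          · show Vtree.node l.shape C1.shape = Vtree.node l.shape r''
            rw [h1]
          · intro g hg p hp
            exact ⟨(hE g hg p hp).1, by rw [h4]; exact (hE g hg p hp).2⟩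
          · simp only [NTDD.size]
            omega
          · simp only [NTDD.width]
            omega
          · intro g σ
            constructor
            · rintro ⟨p, hp, hs1, hs2⟩
              exact ⟨p, hp,
                (NTDD.sat_congr l p.1 (Function.update σ x b) σ (hupd σ)).2 hs1,
                (h7 p.2 σ).1 hs2⟩
            · rintro ⟨p, hp, hs1, hs2⟩
              exact ⟨p, hp,
                (NTDD.sat_congr l p.1 (Function.update σ x b) σ (hupd σ)).1 hs1,
                (h7 p.2 σ).2 hs2⟩
      · -- x occurs nowhere
        have hrr : r.shape.restrict {x} = some r.shape := by
          apply Vtree.restrict_of_disjoint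
          intro v hv hmem
          rw [Finset.mem_singleton] at hmem
          subst hmem
          exact hxr hv
        rw [hll, hrr] at hT'
        obtain rfl := Option.some.inj hT'
        refine ⟨NTDD.node l r ns E, rfl, hWF, hDet, rfl, le_rfl, le_rfl, ?_⟩
        intro g σ
        apply NTDD.sat_congr
        intro v hv
        have hne : v ≠ x := by
          intro h
          subst h
          simp only [NTDD.shape, Vtree.vars, Finset.mem_union] at hv
          rcases hv with h | h
          · exact hxl h
          · exact hxr h
        exact (Function.update_of_ne hne _ _).symm

end Main3


/-- Conditioning: given a TDD `C` of width `k` respecting a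
vtree `T` over `X`, a variable `x ∈ X` and a Boolean `b`, there is a TDD `C'`
respecting `T ∖ x`, of size at most `|C|` and width at most `k`, computing
the Boolean function `f_C[x/b]` over `X ∖ {x}`. -/
theorem stmt2 {V : Type} [DecidableEq V] (X : Finset V) (T : Vtree V)
    (hTp : T.Proper) (hTX : T.vars = X)
    (C : NTDD V) (out : ℕ) (hsh : C.shape = T) (hWF : C.WF) (hDet : C.Det)
    (hout : out ∈ C.nodes) (k : ℕ) (hk : C.width = k)
    (x : V) (hx : x ∈ X) (b : Bool)
    (T' : Vtree V) (hT' : T.remove x = some T') :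
    ∃ (C' : NTDD V) (out' : ℕ),
      C'.shape = T' ∧ C'.WF ∧ C'.Det ∧ out' ∈ C'.nodes ∧
      C'.size ≤ C.size ∧ C'.width ≤ k ∧
      ∀ σ : V → Bool, (C'.sat out' σ ↔ C.sat out (Function.update σ x b)) := by
  obtain ⟨C', h1, h2, h3, h4, h5, h6, h7⟩ :=
    cond_main x b C (by rw [hsh]; exact hTp) hWF hDet T' (by rw [hsh]; exact hT')
  exact ⟨C', out, h1, h2, h3, by rw [h4]; exact hout, h5, by rw [← hk]; exact h6,
    fun σ => h7 out σ⟩
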